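/- arXiv:1710.00896 — 3 statements merged into one kernel-verified Lean document; each statement's English description precedes it below -/
import Mathlib

section
/- Let Φ be the heat kernel on ℝⁿ×ℝ. Suppose α ∈ (0, n+2) and β ∈ [0, n+2) are constants. Then there exists C = C(n,α,β) > 0 such that for all x, z ∈ ℝⁿ and t > 0, ∬_{ℝⁿ×(0,t)} Φ(x−y, t−s)^{α/n} Φ(y−z, s)^{β/n} dy ds ≤ C / (√t)^{α+β−(n+2)}. -/
open Real MeasureTheory Set Metric

noncomputable def heatKernel (n : ℕ) (x : EuclideanSpace ℝ (Fin n)) (t : ℝ) : ℝ :=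
  if 0 < t then (4 * Real.pi * t) ^ (-(n : ℝ) / 2) * Real.exp (-‖x‖ ^ 2 / (4 * t)) else 0

section Helpers

lemma heatKernel_nonneg {n : ℕ} (x : EuclideanSpace ℝ (Fin n)) (t : ℝ) :
    0 ≤ heatKernel n x t := by
  unfold heatKernel
  split_ifs with h
  · positivity
  · exact le_rfl

lemma gauss_int {n : ℕ} (b : ℝ) (hb : 0 < b) (z : EuclideanSpace ℝ (Fin n)) :
    ∫ y : EuclideanSpace ℝ (Fin n), rexp (-b * ‖y - z‖ ^ 2) = (π / b) ^ ((n : ℝ) / 2) := by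
  rw [integral_sub_right_eq_self (fun y => rexp (-b * ‖y‖ ^ 2)) z,
    GaussianFourier.integral_rexp_neg_mul_sq_norm hb]
  simp

lemma gauss_integrable {n : ℕ} (b : ℝ) (hb : 0 < b) (z : EuclideanSpace ℝ (Fin n)) :
    Integrable fun y : EuclideanSpace ℝ (Fin n) => rexp (-b * ‖y - z‖ ^ 2) := by
  have h := (GaussianFourier.integrable_cexp_neg_mul_sq_norm_add
    (V := EuclideanSpace ℝ (Fin n)) (b := (b:ℂ)) (by simpa using hb) 0 0).norm
  have : (fun y : EuclideanSpace ℝ (Fin n) => rexp (-b * ‖y‖ ^ 2)) =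
      fun v => ‖Complex.exp (-(b:ℂ) * ‖v‖ ^ 2 + 0 * (inner ℝ (0 : EuclideanSpace ℝ (Fin n)) v : ℝ))‖ := by
    ext v
    simp [Complex.norm_exp, abs_exp]
    exact Or.inl (by norm_cast)
  have hi : Integrable fun y : EuclideanSpace ℝ (Fin n) => rexp (-b * ‖y‖ ^ 2) := this ▸ h
  exact hi.comp_sub_right z

lemma gauss_prod_le_right {n : ℕ} (a b : ℝ) (ha : 0 ≤ a) (hb : 0 < b)
    (x z : EuclideanSpace ℝ (Fin n)) :
    ∫ y : EuclideanSpace ℝ (Fin n), rexp (-a * ‖x - y‖ ^ 2) * rexp (-b * ‖y - z‖ ^ 2) ≤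
      (π / b) ^ ((n : ℝ) / 2) := by
  rw [← gauss_int b hb z]
  apply integral_mono_of_nonneg
  · filter_upwards with y; positivity
  · exact gauss_integrable b hb z
  · filter_upwards with y
    have h1 : rexp (-a * ‖x - y‖ ^ 2) ≤ 1 := by
      rw [Real.exp_le_one_iff, neg_mul]
      exact neg_nonpos.mpr (mul_nonneg ha (sq_nonneg _))
    calc rexp (-a * ‖x - y‖ ^ 2) * rexp (-b * ‖y - z‖ ^ 2)
        ≤ 1 * rexp (-b * ‖y - z‖ ^ 2) := by
          exact mul_le_mul_of_nonneg_right h1 (exp_pos _).le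
      _ = rexp (-b * ‖y - z‖ ^ 2) := one_mul _

lemma gauss_prod_le_left {n : ℕ} (a b : ℝ) (ha : 0 < a) (hb : 0 ≤ b)
    (x z : EuclideanSpace ℝ (Fin n)) :
    ∫ y : EuclideanSpace ℝ (Fin n), rexp (-a * ‖x - y‖ ^ 2) * rexp (-b * ‖y - z‖ ^ 2) ≤
      (π / a) ^ ((n : ℝ) / 2) := by
  rw [← gauss_int a ha x]
  apply integral_mono_of_nonneg
  · filter_upwards with y; positivity
  · exact gauss_integrable a ha x
  · filter_upwards with y
    have h1 : rexp (-b * ‖y - z‖ ^ 2) ≤ 1 := by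
      rw [Real.exp_le_one_iff, neg_mul]
      exact neg_nonpos.mpr (mul_nonneg hb (sq_nonneg _))
    have h2 : ‖x - y‖ = ‖y - x‖ := norm_sub_rev _ _
    calc rexp (-a * ‖x - y‖ ^ 2) * rexp (-b * ‖y - z‖ ^ 2)
        ≤ rexp (-a * ‖x - y‖ ^ 2) * 1 :=
          mul_le_mul_of_nonneg_left h1 (exp_pos _).le
      _ = rexp (-a * ‖y - x‖ ^ 2) := by rw [mul_one, h2]

lemma heatKernel_rpow {n : ℕ} (hn : 0 < n) (γ τ : ℝ) (hγ : 0 ≤ γ) (hτ : 0 < τ)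
    (w : EuclideanSpace ℝ (Fin n)) :
    heatKernel n w τ ^ (γ / n) =
      (4 * π * τ) ^ (-γ / 2) * rexp (-(γ / (4 * n * τ)) * ‖w‖ ^ 2) := by
  have hn' : (n : ℝ) ≠ 0 := Nat.cast_ne_zero.mpr hn.ne'
  have h4 : (0:ℝ) < 4 * π * τ := by positivity
  rw [heatKernel, if_pos hτ, Real.mul_rpow (rpow_nonneg h4.le _) (exp_pos _).le,
    ← Real.rpow_natCast, ← Real.rpow_mul h4.le, ← Real.exp_mul]
  rw [show (-(n:ℝ)/2) * (γ/n) = -γ/2 by field_simp]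
  congr 1
  field_simp

lemma inner_eq {n : ℕ} (hn : 0 < n) (α β : ℝ) (hα : 0 ≤ α) (hβ : 0 ≤ β)
    (x z : EuclideanSpace ℝ (Fin n)) (τ σ : ℝ) (hτ : 0 < τ) (hσ : 0 < σ) :
    ∫ y : EuclideanSpace ℝ (Fin n),
        heatKernel n (x - y) τ ^ (α / n) * heatKernel n (y - z) σ ^ (β / n) =
      (4 * π * τ) ^ (-α / 2) * (4 * π * σ) ^ (-β / 2) *
        ∫ y : EuclideanSpace ℝ (Fin n),
          rexp (-(α / (4 * n * τ)) * ‖x - y‖ ^ 2) * rexp (-(β / (4 * n * σ)) * ‖y - z‖ ^ 2) := by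
  rw [← MeasureTheory.integral_const_mul]
  congr 1
  ext y
  rw [heatKernel_rpow hn α τ hα hτ, heatKernel_rpow hn β σ hβ hσ]
  ring

lemma bound_right {n : ℕ} (hn : 0 < n) (α β : ℝ) (hα : 0 ≤ α) (hβ : 0 < β)
    (x z : EuclideanSpace ℝ (Fin n)) (τ σ : ℝ) (hτ : 0 < τ) (hσ : 0 < σ) :
    ∫ y : EuclideanSpace ℝ (Fin n),
        heatKernel n (x - y) τ ^ (α / n) * heatKernel n (y - z) σ ^ (β / n) ≤
      ((4 * π) ^ (-α / 2) * (4 * π) ^ (-β / 2) * (4 * π * n / β) ^ ((n : ℝ) / 2)) *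
        τ ^ (-α / 2) * σ ^ (((n : ℝ) - β) / 2) := by
  have hπ : (0:ℝ) < π := pi_pos
  have hn' : (0:ℝ) < n := by exact_mod_cast hn
  have hb : 0 < β / (4 * n * σ) := by positivity
  have ha : 0 ≤ α / (4 * n * τ) := by positivity
  rw [inner_eq hn α β hα hβ.le x z τ σ hτ hσ]
  have key := gauss_prod_le_right (n := n) _ _ ha hb x z
  have hc : 0 ≤ (4 * π * τ) ^ (-α / 2) * (4 * π * σ) ^ (-β / 2) := by positivity
  calc (4 * π * τ) ^ (-α / 2) * (4 * π * σ) ^ (-β / 2) *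
        ∫ y : EuclideanSpace ℝ (Fin n),
          rexp (-(α / (4 * n * τ)) * ‖x - y‖ ^ 2) * rexp (-(β / (4 * n * σ)) * ‖y - z‖ ^ 2)
      ≤ (4 * π * τ) ^ (-α / 2) * (4 * π * σ) ^ (-β / 2) *
          (π / (β / (4 * n * σ))) ^ ((n : ℝ) / 2) := mul_le_mul_of_nonneg_left key hc
    _ = ((4 * π) ^ (-α / 2) * (4 * π) ^ (-β / 2) * (4 * π * n / β) ^ ((n : ℝ) / 2)) *
        τ ^ (-α / 2) * σ ^ (((n : ℝ) - β) / 2) := by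
        rw [show π / (β / (4 * n * σ)) = (4 * π * n / β) * σ by field_simp,
          Real.mul_rpow (by positivity) hσ.le,
          Real.mul_rpow (by positivity) hτ.le,
          Real.mul_rpow (by positivity) hσ.le,
          show ((n : ℝ) - β) / 2 = -β / 2 + (n : ℝ) / 2 by ring,
          Real.rpow_add hσ]
        ring

lemma bound_left {n : ℕ} (hn : 0 < n) (α β : ℝ) (hα : 0 < α) (hβ : 0 ≤ β)
    (x z : EuclideanSpace ℝ (Fin n)) (τ σ : ℝ) (hτ : 0 < τ) (hσ : 0 < σ) :
    ∫ y : EuclideanSpace ℝ (Fin n),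
        heatKernel n (x - y) τ ^ (α / n) * heatKernel n (y - z) σ ^ (β / n) ≤
      ((4 * π) ^ (-α / 2) * (4 * π) ^ (-β / 2) * (4 * π * n / α) ^ ((n : ℝ) / 2)) *
        τ ^ (((n : ℝ) - α) / 2) * σ ^ (-β / 2) := by
  have hπ : (0:ℝ) < π := pi_pos
  have hn' : (0:ℝ) < n := by exact_mod_cast hn
  have hb : 0 ≤ β / (4 * n * σ) := by positivity
  have ha : 0 < α / (4 * n * τ) := by positivity
  rw [inner_eq hn α β hα.le hβ x z τ σ hτ hσ]
  have key := gauss_prod_le_left (n := n) _ _ ha hb x z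
  have hc : 0 ≤ (4 * π * τ) ^ (-α / 2) * (4 * π * σ) ^ (-β / 2) := by positivity
  calc (4 * π * τ) ^ (-α / 2) * (4 * π * σ) ^ (-β / 2) *
        ∫ y : EuclideanSpace ℝ (Fin n),
          rexp (-(α / (4 * n * τ)) * ‖x - y‖ ^ 2) * rexp (-(β / (4 * n * σ)) * ‖y - z‖ ^ 2)
      ≤ (4 * π * τ) ^ (-α / 2) * (4 * π * σ) ^ (-β / 2) *
          (π / (α / (4 * n * τ))) ^ ((n : ℝ) / 2) := mul_le_mul_of_nonneg_left key hc
    _ = ((4 * π) ^ (-α / 2) * (4 * π) ^ (-β / 2) * (4 * π * n / α) ^ ((n : ℝ) / 2)) *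
        τ ^ (((n : ℝ) - α) / 2) * σ ^ (-β / 2) := by
        rw [show π / (α / (4 * n * τ)) = (4 * π * n / α) * τ by field_simp,
          Real.mul_rpow (by positivity) hτ.le,
          Real.mul_rpow (by positivity) hτ.le,
          Real.mul_rpow (by positivity) hσ.le,
          show ((n : ℝ) - α) / 2 = -α / 2 + (n : ℝ) / 2 by ring,
          Real.rpow_add hτ]
        ring

lemma rpow_integrableOn {p T : ℝ} (hp : -1 < p) (hT : 0 < T) :
    IntegrableOn (fun s : ℝ => s ^ p) (Ioc 0 T) := by
  have h := (intervalIntegral.intervalIntegrable_rpow' (a := 0) (b := T) hp)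
  rw [intervalIntegrable_iff_integrableOn_Ioc_of_le hT.le] at h
  exact h

lemma rpow_integral_Ioc {p T : ℝ} (hp : -1 < p) (hT : 0 < T) :
    ∫ s in Ioc 0 T, s ^ p = T ^ (p + 1) / (p + 1) := by
  rw [← intervalIntegral.integral_of_le hT.le, integral_rpow (Or.inl hp),
    Real.zero_rpow (by linarith), sub_zero]

lemma tsub_rpow_integrableOn {p a t : ℝ} (hp : -1 < p) (hat : a < t) :
    IntegrableOn (fun s : ℝ => (t - s) ^ p) (Ioo a t) := by
  have h1 : IntervalIntegrable (fun s : ℝ => s ^ p) volume 0 (t - a) :=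
    intervalIntegral.intervalIntegrable_rpow' hp
  have h2 := (h1.comp_sub_left t).symm
  rw [sub_zero, show t - (t - a) = a by ring] at h2
  rw [intervalIntegrable_iff_integrableOn_Ioo_of_le hat.le] at h2
  exact h2

lemma tsub_rpow_integral {p a t : ℝ} (hp : -1 < p) (hat : a < t) :
    ∫ s in Ioo a t, (t - s) ^ p = (t - a) ^ (p + 1) / (p + 1) := by
  rw [← integral_Ioc_eq_integral_Ioo, ← intervalIntegral.integral_of_le hat.le,
    intervalIntegral.integral_comp_sub_left (fun u : ℝ => u ^ p) t, sub_self,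
    integral_rpow (Or.inl hp), Real.zero_rpow (by linarith), sub_zero]

end Helpers

theorem heatKernel_pow_composition (n : ℕ) (hn : 1 ≤ n) (α β : ℝ)
    (hα : α ∈ Set.Ioo 0 ((n : ℝ) + 2)) (hβ : β ∈ Set.Ico 0 ((n : ℝ) + 2)) :
    ∃ C > 0, ∀ (x z : EuclideanSpace ℝ (Fin n)) (t : ℝ), 0 < t →
      (∫ s in Set.Ioo (0 : ℝ) t, ∫ y : EuclideanSpace ℝ (Fin n),
          heatKernel n (x - y) (t - s) ^ (α / (n : ℝ)) *
            heatKernel n (y - z) s ^ (β / (n : ℝ))) ≤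
        C / Real.sqrt t ^ (α + β - ((n : ℝ) + 2)) := by
  obtain ⟨hα0, hα2⟩ := hα
  obtain ⟨hβ0, hβ2⟩ := hβ
  have hn0 : 0 < n := hn
  have hπ : (0:ℝ) < π := pi_pos
  have hn' : (0:ℝ) < n := by exact_mod_cast hn0
  set q : ℝ := ((n : ℝ) + 2 - α - β) / 2 with hq
  suffices h : ∃ M > 0, ∀ (x z : EuclideanSpace ℝ (Fin n)) (t : ℝ), 0 < t →
      (∫ s in Set.Ioo (0 : ℝ) t, ∫ y : EuclideanSpace ℝ (Fin n),
          heatKernel n (x - y) (t - s) ^ (α / (n : ℝ)) *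
            heatKernel n (y - z) s ^ (β / (n : ℝ))) ≤ M * t ^ q by
    obtain ⟨M, hM, hbound⟩ := h
    refine ⟨M, hM, fun x z t ht => ?_⟩
    have he : Real.sqrt t ^ (α + β - ((n : ℝ) + 2)) = t ^ (-q) := by
      rw [sqrt_eq_rpow, ← Real.rpow_mul ht.le]
      congr 1
      rw [hq]; ring
    rw [he, Real.rpow_neg ht.le, div_inv_eq_mul]
    exact hbound x z t ht
  rcases eq_or_lt_of_le hβ0 with hβe | hβpos
  · -- case β = 0
    subst hβe
    set p2 : ℝ := ((n : ℝ) - α) / 2 with hp2d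
    set K2 : ℝ := (4 * π) ^ (-α / 2) * (4 * π) ^ (-(0:ℝ) / 2) *
      (4 * π * (n : ℝ) / α) ^ ((n : ℝ) / 2) with hK2d
    have hp2 : -1 < p2 := by rw [hp2d]; linarith
    have hK2 : 0 < K2 := by rw [hK2d]; positivity
    refine ⟨K2 / (p2 + 1), div_pos hK2 (by linarith), fun x z t ht => ?_⟩
    have hfg : ∀ s ∈ Ioo (0:ℝ) t,
        (∫ y : EuclideanSpace ℝ (Fin n),
          heatKernel n (x - y) (t - s) ^ (α / (n : ℝ)) *
            heatKernel n (y - z) s ^ ((0:ℝ) / (n : ℝ))) ≤ K2 * (t - s) ^ p2 := by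
      intro s hs
      have hb := bound_left hn0 α 0 hα0 le_rfl x z (t - s) s (by linarith [hs.2]) hs.1
      have h1 : s ^ (-(0:ℝ) / 2) = 1 := by norm_num
      rw [h1, mul_one] at hb
      exact hb
    refine le_trans (integral_mono_of_nonneg (g := fun s => K2 * (t - s) ^ p2) ?_ ?_ ?_) ?_
    · exact Filter.Eventually.of_forall fun s => integral_nonneg fun y =>
        mul_nonneg (Real.rpow_nonneg (heatKernel_nonneg _ _) _)
          (Real.rpow_nonneg (heatKernel_nonneg _ _) _)
    · exact (tsub_rpow_integrableOn hp2 ht).const_mul K2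
    · exact (ae_restrict_mem measurableSet_Ioo).mono hfg
    · rw [MeasureTheory.integral_const_mul, tsub_rpow_integral hp2 ht, sub_zero]
      have hq2 : p2 + 1 = q := by rw [hq, hp2d]; ring
      rw [hq2]
      ring_nf
      exact le_refl _
  · -- case β > 0
    set p1 : ℝ := ((n : ℝ) - β) / 2 with hp1d
    set p2 : ℝ := ((n : ℝ) - α) / 2 with hp2d
    set K1 : ℝ := (4 * π) ^ (-α / 2) * (4 * π) ^ (-β / 2) *
      (4 * π * (n : ℝ) / β) ^ ((n : ℝ) / 2) with hK1d
    set K2 : ℝ := (4 * π) ^ (-α / 2) * (4 * π) ^ (-β / 2) *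
      (4 * π * (n : ℝ) / α) ^ ((n : ℝ) / 2) with hK2d
    have hp1 : -1 < p1 := by rw [hp1d]; linarith
    have hp2 : -1 < p2 := by rw [hp2d]; linarith
    have hK1 : 0 < K1 := by rw [hK1d]; positivity
    have hK2 : 0 < K2 := by rw [hK2d]; positivity
    refine ⟨(K1 / (p1 + 1) + K2 / (p2 + 1)) / 2 ^ q,
      div_pos (add_pos (div_pos hK1 (by linarith)) (div_pos hK2 (by linarith)))
        (Real.rpow_pos_of_pos two_pos q), fun x z t ht => ?_⟩
    have ht2 : 0 < t / 2 := by linarith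
    have htt : t / 2 < t := by linarith
    set g : ℝ → ℝ := fun s => if s ≤ t / 2 then K1 * (t / 2) ^ (-α / 2) * s ^ p1
      else K2 * (t - s) ^ p2 * (t / 2) ^ (-β / 2) with hgd
    have hsplit : Ioo (0:ℝ) t = Ioc 0 (t / 2) ∪ Ioo (t / 2) t :=
      (Ioc_union_Ioo_eq_Ioo (by linarith) htt).symm
    have hi1 : IntegrableOn g (Ioc 0 (t / 2)) := by
      refine IntegrableOn.congr_fun ((rpow_integrableOn hp1 ht2).const_mul
        (K1 * (t / 2) ^ (-α / 2))) ?_ measurableSet_Ioc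
      intro s hs
      simp only [hgd]
      rw [if_pos hs.2]
    have hi2 : IntegrableOn g (Ioo (t / 2) t) := by
      refine IntegrableOn.congr_fun (((tsub_rpow_integrableOn hp2 htt).const_mul K2).mul_const
        ((t / 2) ^ (-β / 2))) ?_ measurableSet_Ioo
      intro s hs
      simp only [hgd]
      rw [if_neg (not_le.mpr hs.1)]
    have hgi : IntegrableOn g (Ioo 0 t) := by
      rw [hsplit]; exact hi1.union hi2
    have hfg : ∀ s ∈ Ioo (0:ℝ) t,
        (∫ y : EuclideanSpace ℝ (Fin n),
          heatKernel n (x - y) (t - s) ^ (α / (n : ℝ)) *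
            heatKernel n (y - z) s ^ (β / (n : ℝ))) ≤ g s := by
      intro s hs
      obtain ⟨hs0, hst⟩ := hs
      simp only [hgd]
      by_cases hs2 : s ≤ t / 2
      · rw [if_pos hs2]
        have hb := bound_right hn0 α β hα0.le hβpos x z (t - s) s (by linarith) hs0
        refine le_trans hb ?_
        have hmono : (t - s) ^ (-α / 2) ≤ (t / 2) ^ (-α / 2) :=
          Real.rpow_le_rpow_of_nonpos ht2 (by linarith) (by linarith)
        exact mul_le_mul_of_nonneg_right (mul_le_mul_of_nonneg_left hmono hK1.le)
          (Real.rpow_nonneg hs0.le _)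
      · rw [if_neg hs2]
        push_neg at hs2
        have hb := bound_left hn0 α β hα0 hβ0 x z (t - s) s (by linarith) hs0
        refine le_trans hb ?_
        have hmono : s ^ (-β / 2) ≤ (t / 2) ^ (-β / 2) :=
          Real.rpow_le_rpow_of_nonpos ht2 hs2.le (by linarith)
        exact mul_le_mul_of_nonneg_left hmono
          (mul_nonneg hK2.le (Real.rpow_nonneg (by linarith) _))
    refine le_trans (integral_mono_of_nonneg ?_ hgi ?_) ?_
    · exact Filter.Eventually.of_forall fun s => integral_nonneg fun y =>
        mul_nonneg (Real.rpow_nonneg (heatKernel_nonneg _ _) _)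
          (Real.rpow_nonneg (heatKernel_nonneg _ _) _)
    · exact (ae_restrict_mem measurableSet_Ioo).mono hfg
    · have hdisj : Disjoint (Ioc (0:ℝ) (t / 2)) (Ioo (t / 2) t) :=
        Set.disjoint_left.mpr fun s h1 h2 => absurd h1.2 (not_le.mpr h2.1)
      rw [hsplit, setIntegral_union hdisj measurableSet_Ioo hi1 hi2]
      have hI1 : ∫ s in Ioc (0:ℝ) (t / 2), g s =
          K1 * (t / 2) ^ (-α / 2) * ((t / 2) ^ (p1 + 1) / (p1 + 1)) := by
        rw [setIntegral_congr_fun measurableSet_Ioc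
          (fun s hs => by simp only [hgd]; rw [if_pos hs.2] :
            EqOn g (fun s => K1 * (t / 2) ^ (-α / 2) * s ^ p1) (Ioc 0 (t / 2))),
          MeasureTheory.integral_const_mul, rpow_integral_Ioc hp1 ht2]
      have hI2 : ∫ s in Ioo (t / 2) t, g s =
          K2 * (t / 2) ^ (-β / 2) * ((t / 2) ^ (p2 + 1) / (p2 + 1)) := by
        rw [setIntegral_congr_fun measurableSet_Ioo
          (fun s hs => by simp only [hgd]; rw [if_neg (not_le.mpr hs.1)]; ring :
            EqOn g (fun s => K2 * (t / 2) ^ (-β / 2) * (t - s) ^ p2) (Ioo (t / 2) t)),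
          MeasureTheory.integral_const_mul, tsub_rpow_integral hp2 htt,
          show t - t / 2 = t / 2 by ring]
      rw [hI1, hI2]
      have e1 : (t / 2) ^ (-α / 2) * (t / 2) ^ (p1 + 1) = (t / 2) ^ q := by
        rw [← Real.rpow_add ht2]; congr 1; rw [hq, hp1d]; ring
      have e2 : (t / 2) ^ (-β / 2) * (t / 2) ^ (p2 + 1) = (t / 2) ^ q := by
        rw [← Real.rpow_add ht2]; congr 1; rw [hq, hp2d]; ring
      have e3 : (t / 2) ^ q = t ^ q / 2 ^ q := Real.div_rpow ht.le (by norm_num) q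
      calc K1 * (t / 2) ^ (-α / 2) * ((t / 2) ^ (p1 + 1) / (p1 + 1)) +
            K2 * (t / 2) ^ (-β / 2) * ((t / 2) ^ (p2 + 1) / (p2 + 1))
          = K1 / (p1 + 1) * ((t / 2) ^ (-α / 2) * (t / 2) ^ (p1 + 1)) +
            K2 / (p2 + 1) * ((t / 2) ^ (-β / 2) * (t / 2) ^ (p2 + 1)) := by ring
        _ = K1 / (p1 + 1) * (t / 2) ^ q + K2 / (p2 + 1) * (t / 2) ^ q := by rw [e1, e2]
        _ = (K1 / (p1 + 1) + K2 / (p2 + 1)) / 2 ^ q * t ^ q := by rw [e3]; ring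
        _ ≤ (K1 / (p1 + 1) + K2 / (p2 + 1)) / 2 ^ q * t ^ q := le_refl _
end

section
/- Let Φ be the heat kernel on ℝⁿ×ℝ and let α > 0 and T be constants. Then there exists C = C(n,α) > 0 such that for all s < t ≤ T and all x ∈ ℝⁿ with |x| ≤ √(T−t), one has ∫_{|y|<√(T−s)} Φ(x−y, t−s)^{α/n} dy ≥ C / (t−s)^{(α−n)/2}. -/
open Real MeasureTheory Set Metric

set_option maxHeartbeats 1000000 in
theorem heatKernel_pow_ball_lower_bound (n : ℕ) (hn : 1 ≤ n) (α : ℝ) (hα : 0 < α) :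
    ∃ C > 0, ∀ (T s t : ℝ) (x : EuclideanSpace ℝ (Fin n)),
      s < t → t ≤ T → ‖x‖ ≤ Real.sqrt (T - t) →
      C / (t - s) ^ ((α - n) / 2) ≤
        ∫ y in Metric.ball (0 : EuclideanSpace ℝ (Fin n)) (Real.sqrt (T - s)),
          heatKernel n (x - y) (t - s) ^ (α / (n : ℝ)) := by
  have hn0 : (0:ℝ) < n := by exact_mod_cast hn
  haveI : Nontrivial (EuclideanSpace ℝ (Fin n)) :=
    Module.nontrivial_of_finrank_pos (R := ℝ) (by rw [finrank_euclideanSpace_fin]; omega)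
  set v := (volume (Metric.ball (0 : EuclideanSpace ℝ (Fin n)) 1)).toReal with hv
  have hvpos : 0 < v := by
    apply ENNReal.toReal_pos
    · exact (measure_ball_pos _ _ one_pos).ne'
    · exact measure_ball_lt_top.ne
  have hπ : (0:ℝ) < 4 * Real.pi := by positivity
  refine ⟨Real.exp (-(9*α)/(64*n)) * (4*Real.pi) ^ (-α/2) * (1/4:ℝ)^n * v, ?_, ?_⟩
  · exact mul_pos (mul_pos (mul_pos (Real.exp_pos _) (Real.rpow_pos_of_pos hπ _))
      (by positivity)) hvpos
  intro T s t x hst htT hx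
  have hτ : 0 < t - s := sub_pos.mpr hst
  set τ := t - s with hτdef
  set b := Real.sqrt τ with hbdef
  have hb : 0 < b := Real.sqrt_pos.mpr hτ
  have hb2 : b ^ 2 = τ := Real.sq_sqrt hτ.le
  clear_value b τ
  set c := max 0 (1 - b / (2 * ‖x‖)) with hcdef
  have hc0 : 0 ≤ c := le_max_left _ _
  have hc1 : c ≤ 1 := by
    apply max_le (by norm_num)
    have h1 : 0 ≤ b / (2 * ‖x‖) := by positivity
    linarith
  set y0 := c • x with hy0def
  have hny0 : ‖y0‖ = c * ‖x‖ := by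
    rw [hy0def, norm_smul, Real.norm_eq_abs, abs_of_nonneg hc0]
  have hxy0 : ‖x - y0‖ ≤ b / 2 := by
    have hxs : x - y0 = (1 - c) • x := by rw [hy0def, sub_smul, one_smul]
    rw [hxs, norm_smul, Real.norm_eq_abs, abs_of_nonneg (by linarith)]
    rcases le_or_gt ‖x‖ (b/2) with h | h
    · calc (1-c) * ‖x‖ ≤ 1 * ‖x‖ :=
            mul_le_mul_of_nonneg_right (by linarith) (norm_nonneg x)
        _ ≤ b/2 := by simpa using h
    · have hxpos : 0 < ‖x‖ := lt_trans (by positivity) h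
      have hcle : c = 1 - b / (2*‖x‖) := max_eq_right (by
        rw [sub_nonneg, div_le_one (by positivity)]; linarith)
      rw [hcle]
      have : (1 - (1 - b / (2*‖x‖))) * ‖x‖ = b / 2 := by
        field_simp; ring
      rw [this]
  have hR : b ≤ Real.sqrt (T - s) := by
    rw [hbdef]; exact Real.sqrt_le_sqrt (by linarith)
  have hy0R : ‖y0‖ + b/4 < Real.sqrt (T - s) := by
    rcases le_or_gt ‖x‖ (b/2) with h | h
    · have hy0le : ‖y0‖ ≤ b/2 := by
        rw [hny0]
        calc c * ‖x‖ ≤ 1 * ‖x‖ := mul_le_mul_of_nonneg_right hc1 (norm_nonneg x)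
          _ ≤ b/2 := by simpa using h
      linarith
    · have hxpos : 0 < ‖x‖ := lt_trans (by positivity) h
      have hcle : c = 1 - b / (2*‖x‖) := max_eq_right (by
        rw [sub_nonneg, div_le_one (by positivity)]; linarith)
      have hy0eq : ‖y0‖ = ‖x‖ - b/2 := by
        rw [hny0, hcle]; field_simp
      have hTt : Real.sqrt (T - t) ≤ Real.sqrt (T - s) := Real.sqrt_le_sqrt (by linarith)
      linarith
  have hsub : Metric.ball y0 (b/4) ⊆ Metric.ball (0 : EuclideanSpace ℝ (Fin n)) (Real.sqrt (T-s)) := by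
    intro y hy
    rw [mem_ball, dist_zero_right]
    have h1 : ‖y - y0‖ < b/4 := by rw [← dist_eq_norm]; exact mem_ball.mp hy
    calc ‖y‖ = ‖(y - y0) + y0‖ := by rw [sub_add_cancel]
      _ ≤ ‖y - y0‖ + ‖y0‖ := norm_add_le _ _
      _ < Real.sqrt (T - s) := by linarith
  have h4πτ : (0:ℝ) < 4 * Real.pi * τ := by positivity
  -- pointwise formula
  have hf : ∀ y : EuclideanSpace ℝ (Fin n), heatKernel n (x - y) τ ^ (α/(n:ℝ)) =
      (4*Real.pi*τ) ^ (-α/2) * Real.exp (-‖x-y‖^2 / (4*τ) * (α/n)) := by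
    intro y
    rw [heatKernel, if_pos hτ, Real.mul_rpow (Real.rpow_nonneg h4πτ.le _) (Real.exp_pos _).le,
      ← Real.rpow_mul h4πτ.le, ← Real.exp_mul]
    have he : -(n:ℝ)/2 * (α/n) = -α/2 := by field_simp
    rw [he]
  -- constant lower bound on small ball
  set κ : ℝ := (4*Real.pi*τ) ^ (-α/2) * Real.exp (-(9*α)/(64*n)) with hκdef
  have hκle : ∀ y ∈ Metric.ball y0 (b/4), κ ≤ heatKernel n (x-y) τ ^ (α/(n:ℝ)) := by
    intro y hy
    rw [hf y, hκdef]
    apply mul_le_mul_of_nonneg_left _ (Real.rpow_nonneg h4πτ.le _)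
    apply Real.exp_le_exp.mpr
    have h1 : ‖y - y0‖ < b/4 := by rw [← dist_eq_norm]; exact mem_ball.mp hy
    have hxy : ‖x - y‖ ≤ 3*b/4 := by
      calc ‖x - y‖ = ‖(x - y0) + (y0 - y)‖ := by rw [sub_add_sub_cancel]
        _ ≤ ‖x - y0‖ + ‖y0 - y‖ := norm_add_le _ _
        _ ≤ 3*b/4 := by rw [norm_sub_rev y0 y]; linarith
    have hsq : ‖x - y‖^2 ≤ 9/16 * τ := by nlinarith [norm_nonneg (x - y), hb2]
    have h2 : -‖x - y‖ ^ 2 / (4 * τ) * (α / (n:ℝ)) = -(‖x-y‖^2 * α / ((n:ℝ) * (4*τ))) := by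
      ring
    rw [h2, neg_div, neg_le_neg_iff, div_le_div_iff₀ (by positivity) (by positivity)]
    nlinarith [hα.le, hn0, hτ, hsq,
      mul_le_mul_of_nonneg_left hsq (by positivity : (0:ℝ) ≤ 64 * (n:ℝ) * α)]
  -- integrability
  have hcont : Continuous fun y : EuclideanSpace ℝ (Fin n) =>
      heatKernel n (x - y) τ ^ (α/(n:ℝ)) := by
    have : (fun y : EuclideanSpace ℝ (Fin n) => heatKernel n (x - y) τ ^ (α/(n:ℝ)))
        = fun y => (4*Real.pi*τ) ^ (-α/2) * Real.exp (-‖x-y‖^2 / (4*τ) * (α/n)) :=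
      funext hf
    rw [this]
    apply continuous_const.mul
    apply Real.continuous_exp.comp
    exact (((continuous_const.sub continuous_id).norm.pow 2).neg.div_const _).mul
      continuous_const
  have hint_big : IntegrableOn (fun y => heatKernel n (x-y) τ ^ (α/(n:ℝ)))
      (Metric.ball (0 : EuclideanSpace ℝ (Fin n)) (Real.sqrt (T-s))) volume :=
    (hcont.locallyIntegrable.integrableOn_isCompact (isCompact_closedBall _ _)).mono_set
      ball_subset_closedBall
  have hint_small : IntegrableOn (fun y => heatKernel n (x-y) τ ^ (α/(n:ℝ)))
      (Metric.ball y0 (b/4)) volume := hint_big.mono_set hsub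
  have step1 : ∫ y in Metric.ball y0 (b/4), heatKernel n (x-y) τ ^ (α/(n:ℝ)) ≤
      ∫ y in Metric.ball (0 : EuclideanSpace ℝ (Fin n)) (Real.sqrt (T-s)),
        heatKernel n (x-y) τ ^ (α/(n:ℝ)) := by
    apply setIntegral_mono_set hint_big
    · apply ae_of_all
      intro y
      exact Real.rpow_nonneg (by rw [heatKernel]; split <;> positivity) _
    · exact HasSubset.Subset.eventuallyLE hsub
  have step2 : κ * (volume (Metric.ball y0 (b/4))).toReal ≤
      ∫ y in Metric.ball y0 (b/4), heatKernel n (x-y) τ ^ (α/(n:ℝ)) :=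
    setIntegral_ge_of_const_le_real measurableSet_ball measure_ball_lt_top.ne hκle hint_small
  have hvol : (volume (Metric.ball y0 (b/4))).toReal = (b/4)^n * v := by
    rw [Measure.addHaar_ball volume y0 (by positivity : (0:ℝ) ≤ b/4),
      ENNReal.toReal_mul, ENNReal.toReal_ofReal (by positivity), finrank_euclideanSpace_fin]
  -- final computation
  have hkey : Real.exp (-(9*α)/(64*n)) * (4*Real.pi) ^ (-α/2) * (1/4:ℝ)^n * v / τ ^ ((α - n)/2)
      = κ * ((b/4)^n * v) := by
    have hbn : b ^ n = τ ^ ((n:ℝ)/2) := by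
      rw [hbdef, ← Real.rpow_natCast (Real.sqrt τ) n, Real.sqrt_eq_rpow,
        ← Real.rpow_mul hτ.le]
      congr 1
      ring
    have h1 : (4*Real.pi*τ) ^ (-α/2) = (4*Real.pi) ^ (-α/2) * τ ^ (-α/2) :=
      Real.mul_rpow hπ.le hτ.le
    have h2 : τ ^ (-((α - (n:ℝ))/2)) = τ ^ (-α/2) * τ ^ ((n:ℝ)/2) := by
      rw [← Real.rpow_add hτ]; congr 1; ring
    rw [hκdef, h1, div_eq_mul_inv _ (τ ^ ((α - (n:ℝ))/2)), ← Real.rpow_neg hτ.le, h2]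
    simp only [div_pow, one_pow, hbn]
    have h4 : ((4:ℝ))^n ≠ 0 := by positivity
    field_simp
  rw [hkey]
  calc κ * ((b/4)^n * v) = κ * (volume (Metric.ball y0 (b/4))).toReal := by rw [hvol]
    _ ≤ ∫ y in Metric.ball y0 (b/4), heatKernel n (x-y) τ ^ (α/(n:ℝ)) := step2
    _ ≤ _ := step1
end

section
/- Suppose u ∈ L^p(Ω × (0,T)) for some open set Ω ⊂ ℝⁿ, p ∈ [1,∞), and T > 0, and suppose u(x,t) = ∫_{ℝⁿ} Φ(x−y, t) dμ(y) for some finite positive Borel measure μ on ℝⁿ. Then for every compact subset K of Ω, max_{x∈K} u(x,t) = o(t^{−(n+2)/(2p)}) as t → 0⁺. -/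
open Real MeasureTheory Set Metric

lemma hk_nonneg (n : ℕ) (x : EuclideanSpace ℝ (Fin n)) (t : ℝ) : 0 ≤ heatKernel n x t := by
  unfold heatKernel
  split
  · positivity
  · exact le_refl _

lemma hk_cont (n : ℕ) {t : ℝ} (ht : 0 < t) : Continuous fun x : EuclideanSpace ℝ (Fin n) => heatKernel n x t := by
  simp only [heatKernel, if_pos ht]
  fun_prop

lemma hk_le (n : ℕ) (x : EuclideanSpace ℝ (Fin n)) {t : ℝ} (ht : 0 < t) :
    heatKernel n x t ≤ (4 * Real.pi * t) ^ (-(n : ℝ) / 2) := by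
  rw [heatKernel, if_pos ht]
  have h1 : Real.exp (-‖x‖ ^ 2 / (4 * t)) ≤ 1 := by
    rw [Real.exp_le_one_iff]
    have : (0:ℝ) ≤ ‖x‖ ^ 2 := by positivity
    have h4t : (0:ℝ) < 4 * t := by linarith
    apply div_nonpos_of_nonpos_of_nonneg <;> [linarith; linarith]
  nlinarith [Real.rpow_pos_of_pos (by positivity : (0:ℝ) < 4 * Real.pi * t) (-(n:ℝ)/2), Real.exp_pos (-‖x‖ ^ 2 / (4 * t))]

lemma hk_integrable (n : ℕ) (μ : Measure (EuclideanSpace ℝ (Fin n))) [IsFiniteMeasure μ]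
    (x : EuclideanSpace ℝ (Fin n)) {t : ℝ} (ht : 0 < t) :
    Integrable (fun y => heatKernel n (x - y) t) μ := by
  refine Integrable.mono' (integrable_const ((4 * Real.pi * t) ^ (-(n : ℝ) / 2))) ?_ ?_
  · exact ((hk_cont n ht).comp (continuous_const.sub continuous_id)).aestronglyMeasurable
  · refine ae_of_all _ fun y => ?_
    rw [Real.norm_eq_abs, abs_of_nonneg (hk_nonneg _ _ _)]
    exact hk_le n _ ht


lemma hk_key (n : ℕ) {t s : ℝ} (ht : 0 < t) (hs1 : 2 * t ≤ s) (hs2 : s ≤ 3 * t)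
    {x z : EuclideanSpace ℝ (Fin n)} (hz : ‖z - x‖ ≤ Real.sqrt t) (y : EuclideanSpace ℝ (Fin n)) :
    (3 : ℝ) ^ (-(n : ℝ) / 2) * Real.exp (-(1/4)) * heatKernel n (x - y) t ≤ heatKernel n (z - y) s := by
  have hst : 0 < s := by linarith
  rw [heatKernel, if_pos ht, heatKernel, if_pos hst]
  have hA : (3 : ℝ) ^ (-(n : ℝ) / 2) * (4 * Real.pi * t) ^ (-(n : ℝ) / 2) ≤
      (4 * Real.pi * s) ^ (-(n : ℝ) / 2) := by
    rw [← Real.mul_rpow (by norm_num) (by positivity)]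
    apply Real.rpow_le_rpow_of_nonpos (by positivity)
    · nlinarith [Real.pi_pos]
    · have : (0:ℝ) ≤ (n:ℝ) := Nat.cast_nonneg n
      linarith
  have hnn : ‖z - y‖ ≤ ‖x - y‖ + ‖z - x‖ := by
    have : z - y = (z - x) + (x - y) := by abel
    rw [this]
    rw [add_comm (‖x - y‖)]
    exact norm_add_le _ _
  have hzx2 : ‖z - x‖ ^ 2 ≤ t := by
    calc ‖z - x‖ ^ 2 ≤ (Real.sqrt t) ^ 2 := by
          apply pow_le_pow_left₀ (norm_nonneg _) hz
      _ = t := Real.sq_sqrt ht.le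
  have hzy2 : ‖z - y‖ ^ 2 ≤ 2 * ‖x - y‖ ^ 2 + 2 * t := by
    have h := pow_le_pow_left₀ (norm_nonneg (z - y)) hnn 2
    nlinarith [h, sq_nonneg (‖x - y‖ - ‖z - x‖), hzx2]
  have hfrac : ‖z - y‖ ^ 2 / (4 * s) ≤ ‖x - y‖ ^ 2 / (4 * t) + 1/4 := by
    have h1 : ‖z - y‖ ^ 2 / (4 * s) ≤ (2 * ‖x - y‖ ^ 2 + 2 * t) / (8 * t) := by
      apply div_le_div₀ (by positivity) hzy2 (by linarith) (by linarith)
    have h2 : (2 * ‖x - y‖ ^ 2 + 2 * t) / (8 * t) = ‖x - y‖ ^ 2 / (4 * t) + 1/4 := by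
      field_simp
      ring
    linarith
  have hB : Real.exp (-(1/4)) * Real.exp (-‖x - y‖ ^ 2 / (4 * t)) ≤
      Real.exp (-‖z - y‖ ^ 2 / (4 * s)) := by
    rw [← Real.exp_add]
    apply Real.exp_le_exp.2
    have h1 : -‖z - y‖ ^ 2 / (4 * s) = -(‖z - y‖ ^ 2 / (4 * s)) := by ring
    have h2 : -‖x - y‖ ^ 2 / (4 * t) = -(‖x - y‖ ^ 2 / (4 * t)) := by ring
    rw [h1, h2]
    linarith
  calc (3 : ℝ) ^ (-(n : ℝ) / 2) * Real.exp (-(1/4)) *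
        ((4 * Real.pi * t) ^ (-(n : ℝ) / 2) * Real.exp (-‖x - y‖ ^ 2 / (4 * t)))
      = ((3 : ℝ) ^ (-(n : ℝ) / 2) * (4 * Real.pi * t) ^ (-(n : ℝ) / 2)) *
        (Real.exp (-(1/4)) * Real.exp (-‖x - y‖ ^ 2 / (4 * t))) := by ring
    _ ≤ (4 * Real.pi * s) ^ (-(n : ℝ) / 2) * Real.exp (-‖z - y‖ ^ 2 / (4 * s)) := by
        apply mul_le_mul hA hB (by positivity) (by positivity)

theorem initial_trace_little_o (n : ℕ) (hn : 1 ≤ n) (Ω : Set (EuclideanSpace ℝ (Fin n)))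
    (hΩ : IsOpen Ω) (p T : ℝ) (hp : 1 ≤ p) (hT : 0 < T)
    (μ : Measure (EuclideanSpace ℝ (Fin n))) [IsFiniteMeasure μ]
    (u : EuclideanSpace ℝ (Fin n) → ℝ → ℝ)
    (hu : ∀ (x : EuclideanSpace ℝ (Fin n)) (t : ℝ), 0 < t →
      u x t = ∫ y, heatKernel n (x - y) t ∂μ)
    (hLp : IntegrableOn (fun z : EuclideanSpace ℝ (Fin n) × ℝ => u z.1 z.2 ^ p)
      (Ω ×ˢ Set.Ioo 0 T))
    (K : Set (EuclideanSpace ℝ (Fin n))) (hK : IsCompact K) (hKΩ : K ⊆ Ω) :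
    ∀ ε > 0, ∃ δ > 0, ∀ t ∈ Set.Ioo (0 : ℝ) δ, ∀ x ∈ K,
      u x t ≤ ε * t ^ (-((n : ℝ) + 2) / (2 * p)) := by
  intro ε hε
  haveI : Nontrivial (EuclideanSpace ℝ (Fin n)) := by
    apply Module.nontrivial_of_finrank_pos (R := ℝ)
    rw [finrank_euclideanSpace_fin]
    exact hn
  have hp0 : (0:ℝ) < p := lt_of_lt_of_le one_pos hp
  obtain ⟨r, hr, hrΩ⟩ := hK.exists_cthickening_subset_open hΩ hKΩ
  set c : ℝ := (3 : ℝ) ^ (-(n : ℝ) / 2) * Real.exp (-(1/4)) with hc_def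
  have hc : 0 < c := by positivity
  set vB : ℝ := (volume (ball (0 : EuclideanSpace ℝ (Fin n)) 1)).toReal with hvB_def
  have hvB : 0 < vB := ENNReal.toReal_pos (measure_ball_pos _ _ one_pos).ne' measure_ball_lt_top.ne
  set f : EuclideanSpace ℝ (Fin n) × ℝ → ℝ := fun z => u z.1 z.2 ^ p with hf_def
  set M : ℝ := c ^ p * vB with hM_def
  have hM : 0 < M := by positivity
  set δmax : ℝ := min (r ^ 2) (T / 3) with hδmax_def
  have hδmax : 0 < δmax := lt_min (by positivity) (by linarith)
  have hδmaxT : δmax ≤ T / 3 := min_le_right _ _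
  have hδmaxr : δmax ≤ r ^ 2 := min_le_left _ _
  set Kr := cthickening r K with hKr_def
  have hKrm : MeasurableSet Kr := isClosed_cthickening.measurableSet
  have hbig_sub : ∀ d : ℝ, d ≤ T → Kr ×ˢ Ioo 0 d ⊆ Ω ×ˢ Ioo 0 T := by
    intro d hd
    apply prod_mono hrΩ
    exact Ioo_subset_Ioo le_rfl hd
  -- choose m with small integral over the slab
  have htend : Filter.Tendsto (fun m : ℕ => ∫ z in Kr ×ˢ Ioo (0:ℝ) (δmax / (m+1)), f z)
      Filter.atTop (nhds 0) := by
    have h0 := tendsto_setIntegral_of_antitone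
      (s := fun m : ℕ => Kr ×ˢ Ioo (0:ℝ) (δmax / (m+1))) (f := f) (μ := volume)
      (fun m => hKrm.prod measurableSet_Ioo)
      (fun m m' hmm' => prod_mono_right (Ioo_subset_Ioo le_rfl
        (div_le_div_of_nonneg_left hδmax.le (by positivity)
          (by exact_mod_cast Nat.add_le_add_right hmm' 1))))
      ⟨0, hLp.mono_set (by
        apply hbig_sub
        simp only [Nat.cast_zero, zero_add, div_one]
        linarith)⟩
    have hempty : (⋂ m : ℕ, Kr ×ˢ Ioo (0:ℝ) (δmax / (m+1))) = ∅ := by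
      ext z
      simp only [mem_iInter, mem_empty_iff_false, iff_false]
      intro h
      have h0 := h 0
      have hz2 : 0 < z.2 := h0.2.1
      obtain ⟨m, hm⟩ := exists_nat_gt (δmax / z.2)
      have h1 : z.2 < δmax / (m+1) := (h m).2.2
      have h2 : δmax < m * z.2 := by
        rw [div_lt_iff₀ hz2] at hm
        linarith
      rw [lt_div_iff₀ (by positivity)] at h1
      nlinarith
    rwa [hempty, setIntegral_empty] at h0
  obtain ⟨m, hm_small⟩ := (htend.eventually (gt_mem_nhds (show (0:ℝ) < M * ε ^ p by positivity))).exists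
  set d : ℝ := δmax / (m+1) with hd_def
  have hd0 : 0 < d := by positivity
  have hdδmax : d ≤ δmax := div_le_self hδmax.le (by exact_mod_cast Nat.le_add_left 1 m)
  have hdT : d ≤ T := by
    calc d ≤ δmax := hdδmax
      _ ≤ T / 3 := hδmaxT
      _ ≤ T := by linarith
  refine ⟨d / 3, by positivity, ?_⟩
  rintro t ⟨ht0, htδ⟩ x hx
  -- basic facts about t
  have h3t : 3 * t < d := by linarith
  have htδmax : t < δmax := by
    have : t < d := by linarith
    linarith
  have hsqt : Real.sqrt t ≤ r := by
    calc Real.sqrt t ≤ Real.sqrt (r ^ 2) := Real.sqrt_le_sqrt (by linarith)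
      _ = r := Real.sqrt_sq hr.le
  have h3tT : 3 * t ≤ T := by
    have : d ≤ T := hdT
    linarith
  set cyl : Set (EuclideanSpace ℝ (Fin n) × ℝ) := ball x (Real.sqrt t) ×ˢ Ioo (2*t) (3*t)
    with hcyl_def
  have cylmeas : MeasurableSet cyl := measurableSet_ball.prod measurableSet_Ioo
  have hball_Kr : ball x (Real.sqrt t) ⊆ Kr := by
    intro z hz
    exact mem_cthickening_of_dist_le z x r K hx (le_trans (mem_ball.1 hz).le hsqt)
  have hcyl_subΩ : cyl ⊆ Ω ×ˢ Ioo 0 T := by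
    rintro ⟨z1, s⟩ ⟨hz1, hs⟩
    exact ⟨hrΩ (hball_Kr hz1), ⟨by linarith [hs.1], by linarith [hs.2]⟩⟩
  have hcyl_subKr : cyl ⊆ Kr ×ˢ Ioo 0 d := by
    rintro ⟨z1, s⟩ ⟨hz1, hs⟩
    exact ⟨hball_Kr hz1, ⟨by linarith [hs.1], by linarith [hs.2]⟩⟩
  have huxt : 0 ≤ u x t := by
    rw [hu x t ht0]
    exact integral_nonneg fun y => hk_nonneg n _ t
  -- pointwise lower bound on the cylinder
  have claim : ∀ z ∈ cyl, c ^ p * u x t ^ p ≤ f z := by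
    rintro ⟨z1, s⟩ ⟨hz1, hs⟩
    have hs0 : 0 < s := by
      have := hs.1
      linarith
    have hle : c * u x t ≤ u z1 s := by
      rw [hu x t ht0, hu z1 s hs0, ← integral_const_mul]
      refine integral_mono ((hk_integrable n μ x ht0).const_mul c) (hk_integrable n μ z1 hs0) ?_
      intro y
      have hznorm : ‖z1 - x‖ ≤ Real.sqrt t := by
        rw [← dist_eq_norm]
        exact (mem_ball.1 hz1).le
      exact hk_key n ht0 hs.1.le hs.2.le hznorm y
    calc c ^ p * u x t ^ p = (c * u x t) ^ p := (Real.mul_rpow hc.le huxt).symm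
      _ ≤ (u z1 s) ^ p := Real.rpow_le_rpow (by positivity) hle hp0.le
  -- volume of cylinder
  have hvol : volume cyl = ENNReal.ofReal ((Real.sqrt t) ^ n)
      * volume (ball (0 : EuclideanSpace ℝ (Fin n)) 1) * ENNReal.ofReal t := by
    have h32 : 3 * t - 2 * t = t := by ring
    rw [hcyl_def, Measure.volume_eq_prod, Measure.prod_prod,
      Measure.addHaar_ball (μ := volume) x (Real.sqrt_nonneg t), finrank_euclideanSpace_fin,
      Real.volume_Ioo, h32]
  have hvol_lt : volume cyl < ⊤ := by
    rw [hvol]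
    exact ENNReal.mul_lt_top
      (ENNReal.mul_lt_top ENNReal.ofReal_lt_top measure_ball_lt_top) ENNReal.ofReal_lt_top
  have hvol_toReal : (volume cyl).toReal = (Real.sqrt t) ^ n * vB * t := by
    rw [hvol, ENNReal.toReal_mul, ENNReal.toReal_mul,
      ENNReal.toReal_ofReal (by positivity), ENNReal.toReal_ofReal ht0.le]
  -- lower bound of the integral over the cylinder
  have hlow : c ^ p * u x t ^ p * ((Real.sqrt t) ^ n * vB * t) ≤ ∫ z in cyl, f z := by
    have h1 := setIntegral_mono_on (integrableOn_const hvol_lt.ne)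
      (hLp.mono_set hcyl_subΩ) cylmeas claim
    rwa [setIntegral_const, smul_eq_mul, Measure.real, hvol_toReal, mul_comm] at h1
  -- upper bound: monotonicity of integral over sets
  have hup : (∫ z in cyl, f z) ≤ ∫ z in Kr ×ˢ Ioo (0:ℝ) d, f z := by
    refine setIntegral_mono_set (hLp.mono_set (hbig_sub d hdT)) ?_
      (HasSubset.Subset.eventuallyLE hcyl_subKr)
    refine (ae_restrict_iff' (hKrm.prod measurableSet_Ioo)).2 (ae_of_all _ ?_)
    rintro ⟨z1, s⟩ ⟨_, hs0, _⟩
    have : 0 ≤ u z1 s := by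
      rw [hu z1 s hs0]
      exact integral_nonneg fun y => hk_nonneg n _ s
    exact Real.rpow_nonneg this p
  have hcomb : c ^ p * u x t ^ p * ((Real.sqrt t) ^ n * vB * t) < M * ε ^ p :=
    lt_of_le_of_lt (le_trans hlow hup) hm_small
  -- convert volume factor to rpow
  have hpow : (Real.sqrt t) ^ n * t = t ^ (((n:ℝ) + 2) / 2) := by
    rw [Real.sqrt_eq_rpow, ← Real.rpow_natCast (t ^ ((1:ℝ)/2)) n, ← Real.rpow_mul ht0.le]
    nth_rewrite 2 [← Real.rpow_one t]
    rw [← Real.rpow_add ht0]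
    congr 1
    ring
  have hkey : u x t ^ p * t ^ (((n:ℝ) + 2) / 2) ≤ ε ^ p := by
    have h2 : (c ^ p * vB) * (u x t ^ p * t ^ (((n:ℝ) + 2) / 2))
        = c ^ p * u x t ^ p * ((Real.sqrt t) ^ n * vB * t) := by
      rw [← hpow]; ring
    have h3 : (c ^ p * vB) * (u x t ^ p * t ^ (((n:ℝ) + 2) / 2)) ≤ (c ^ p * vB) * ε ^ p := by
      rw [h2, hM_def] at *
      exact hcomb.le
    exact le_of_mul_le_mul_left h3 (by positivity)
  have h5 : u x t ^ p ≤ ε ^ p * t ^ (-(((n:ℝ) + 2) / 2)) := by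
    have htE : (0:ℝ) < t ^ (((n:ℝ) + 2) / 2) := Real.rpow_pos_of_pos ht0 _
    rw [Real.rpow_neg ht0.le, ← div_eq_mul_inv]
    exact (le_div_iff₀ htE).2 hkey
  -- extract the final bound
  have h6 := Real.rpow_le_rpow (Real.rpow_nonneg huxt p) h5 (by positivity : (0:ℝ) ≤ 1/p)
  rw [← Real.rpow_mul huxt, mul_one_div_cancel hp0.ne', Real.rpow_one] at h6
  rw [Real.mul_rpow (by positivity) (by positivity), ← Real.rpow_mul (by positivity : (0:ℝ) ≤ ε),
    mul_one_div_cancel hp0.ne', Real.rpow_one, ← Real.rpow_mul ht0.le] at h6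
  have hexp : (-(((n:ℝ) + 2) / 2)) * (1/p) = -((n : ℝ) + 2) / (2 * p) := by ring
  rwa [hexp] at h6
end
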